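/- For every r ≥ 2, the polynomial q(z) = 1 - 2z - z² + 2z^{r+1} - 2z^{r+2} + 2z^{2r+2} satisfies q(0) = 1 > 0 and q(1/2) < 0, hence has a root in (0, 1/2); moreover q'(α) < 0 for all 0 < α < 1/2, so this root is unique and simple in (0,1/2). -/

import Mathlib

/-- q(z) = 1 - 2z - z² + 2z^{r+1} - 2z^{r+2} + 2z^{2r+2}. -/
def qPoly (r : ℕ) (z : ℝ) : ℝ :=
  1 - 2 * z - z ^ 2 + 2 * z ^ (r + 1) - 2 * z ^ (r + 2) + 2 * z ^ (2 * r + 2)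

lemma qPoly_hasDerivAt (r : ℕ) (x : ℝ) :
    HasDerivAt (qPoly r)
      (-2 - 2 * x + 2 * (r + 1) * x ^ r - 2 * (r + 2) * x ^ (r + 1)
        + 2 * (2 * r + 2) * x ^ (2 * r + 1)) x := by
  have h1 : HasDerivAt (fun z : ℝ => z ^ (r + 1)) ((r + 1 : ℕ) * x ^ r) x := by
    simpa using hasDerivAt_pow (r + 1) x
  have h2 : HasDerivAt (fun z : ℝ => z ^ (r + 2)) ((r + 2 : ℕ) * x ^ (r + 1)) x := by
    simpa using hasDerivAt_pow (r + 2) x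
  have h3 : HasDerivAt (fun z : ℝ => z ^ (2 * r + 2)) ((2 * r + 2 : ℕ) * x ^ (2 * r + 1)) x := by
    simpa using hasDerivAt_pow (2 * r + 2) x
  have h4 : HasDerivAt (fun z : ℝ => z ^ 2) (2 * x ^ 1) x := by
    simpa using hasDerivAt_pow 2 x
  have h := (((((hasDerivAt_const x (1 : ℝ)).sub ((hasDerivAt_id x).const_mul 2)).sub h4).add
      (h1.const_mul 2)).sub (h2.const_mul 2)).add (h3.const_mul 2)
  have h' : HasDerivAt (fun z : ℝ =>
      1 - 2 * z - z ^ 2 + 2 * z ^ (r + 1) - 2 * z ^ (r + 2) + 2 * z ^ (2 * r + 2))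
      (-2 - 2 * x + 2 * (r + 1) * x ^ r - 2 * (r + 2) * x ^ (r + 1)
        + 2 * (2 * r + 2) * x ^ (2 * r + 1)) x := by
    refine h.congr_deriv ?_
    push_cast
    ring
  exact h'

lemma qPoly_deriv_neg (r : ℕ) (hr : 2 ≤ r) {x : ℝ} (hx : x ∈ Set.Ioo (0 : ℝ) (1 / 2)) :
    deriv (qPoly r) x < 0 := by
  obtain ⟨hx0, hx2⟩ := hx
  rw [(qPoly_hasDerivAt r x).deriv]
  have hrpos : 0 < r := by omega
  have hpow : ((r : ℝ) + 1) ≤ 2 ^ r := by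
    have := Nat.lt_two_pow_self (n := r)
    exact_mod_cast this
  have hpow2 : ((2 * r + 2 : ℕ) : ℝ) ≤ (r + 2) * 2 ^ r := by
    have h4 : (4 : ℕ) ≤ 2 ^ r := by
      calc (4 : ℕ) = 2 ^ 2 := rfl
      _ ≤ 2 ^ r := Nat.pow_le_pow_right (by norm_num) hr
    have : (2 * r + 2 : ℕ) ≤ (r + 2) * 2 ^ r := by
      calc 2 * r + 2 ≤ (r + 2) * 4 := by omega
      _ ≤ (r + 2) * 2 ^ r := Nat.mul_le_mul_left _ h4
    exact_mod_cast this
  set a : ℝ := x ^ r with ha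
  have ha0 : 0 < a := pow_pos hx0 r
  have haup : a < (1 / 2) ^ r := pow_lt_pow_left₀ hx2 hx0.le hrpos.ne'
  have hhalf : ((1 : ℝ) / 2) ^ r = 1 / 2 ^ r := by rw [div_pow, one_pow]
  have h2pos : (0 : ℝ) < 2 ^ r := by positivity
  have ha1 : ((r : ℝ) + 1) * a < 1 := by
    have : ((r : ℝ) + 1) * a < ((r : ℝ) + 1) * (1 / 2 ^ r) := by
      apply mul_lt_mul_of_pos_left (hhalf ▸ haup) (by positivity)
    calc ((r : ℝ) + 1) * a < ((r : ℝ) + 1) * (1 / 2 ^ r) := this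
      _ ≤ 1 := by rw [mul_one_div, div_le_one h2pos]; exact hpow
  have ha2 : (2 * (r : ℝ) + 2) * a ≤ (r : ℝ) + 2 := by
    have h1 : (2 * (r : ℝ) + 2) * a ≤ (2 * (r : ℝ) + 2) * (1 / 2 ^ r) := by
      apply mul_le_mul_of_nonneg_left (hhalf ▸ haup.le) (by positivity)
    have h2 : (2 * (r : ℝ) + 2) * (1 / 2 ^ r) ≤ (r : ℝ) + 2 := by
      rw [mul_one_div, div_le_iff₀ h2pos]
      push_cast at hpow2
      linarith
    linarith
  have e1 : x ^ (r + 1) = x * a := by rw [ha, pow_succ]; ring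
  have e2 : x ^ (2 * r + 1) = x * a ^ 2 := by
    rw [ha, ← pow_mul, show 2 * r + 1 = r * 2 + 1 by ring, pow_succ]; ring
  rw [e1, e2]
  nlinarith [mul_pos hx0 ha0, mul_le_mul_of_nonneg_left ha2 (mul_pos hx0 ha0).le,
    mul_pos (mul_pos hx0 ha0) ha0]

lemma qPoly_continuous (r : ℕ) : Continuous (qPoly r) := by
  unfold qPoly; fun_prop

theorem qPoly_root_in_Ioo (r : ℕ) (hr : 2 ≤ r) :
    qPoly r 0 = 1 ∧ qPoly r (1 / 2) < 0 ∧
    (∃! ρ : ℝ, ρ ∈ Set.Ioo (0 : ℝ) (1 / 2) ∧ qPoly r ρ = 0) ∧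
    (∀ α ∈ Set.Ioo (0 : ℝ) (1 / 2), deriv (qPoly r) α < 0) := by
  have hq0 : qPoly r 0 = 1 := by
    simp [qPoly, zero_pow, (by omega : r + 1 ≠ 0), (by omega : r + 2 ≠ 0),
      (by omega : 2 * r + 2 ≠ 0)]
  have hqhalf : qPoly r (1 / 2) < 0 := by
    have h1 : ((1 : ℝ) / 2) ^ (r + 1) = (1 / 2) ^ r * (1 / 2) := pow_succ _ _
    have h2 : ((1 : ℝ) / 2) ^ (r + 2) = (1 / 2) ^ r * (1 / 4) := by rw [pow_add]; norm_num
    have h3 : ((1 : ℝ) / 2) ^ (2 * r + 2) = ((1 / 2) ^ r) ^ 2 * (1 / 4) := by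
      rw [show 2 * r + 2 = r * 2 + 2 by ring, pow_add, pow_mul]; norm_num
    have key : qPoly r (1 / 2) = -(1 / 4) + (1 / 2 : ℝ) ^ r / 2 + ((1 / 2 : ℝ) ^ r) ^ 2 / 2 := by
      rw [qPoly, h1, h2, h3]; ring
    have ht0 : (0 : ℝ) < (1 / 2 : ℝ) ^ r := by positivity
    have ht : (1 / 2 : ℝ) ^ r ≤ 1 / 4 := by
      calc (1 / 2 : ℝ) ^ r ≤ (1 / 2 : ℝ) ^ 2 :=
        pow_le_pow_of_le_one (by norm_num) (by norm_num) hr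
      _ = 1 / 4 := by norm_num
    rw [key]; nlinarith
  have hderiv : ∀ α ∈ Set.Ioo (0 : ℝ) (1 / 2), deriv (qPoly r) α < 0 :=
    fun α hα => qPoly_deriv_neg r hr hα
  have hanti : StrictAntiOn (qPoly r) (Set.Icc 0 (1 / 2)) := by
    apply strictAntiOn_of_deriv_neg (convex_Icc _ _) (qPoly_continuous r).continuousOn
    intro x hx
    rw [interior_Icc] at hx
    exact hderiv x hx
  refine ⟨hq0, hqhalf, ?_, hderiv⟩
  have hcont : ContinuousOn (qPoly r) (Set.Icc 0 (1 / 2)) := (qPoly_continuous r).continuousOn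
  have h0mem : (0 : ℝ) ∈ Set.Ioo (qPoly r (1 / 2)) (qPoly r 0) := by
    rw [hq0]; exact ⟨hqhalf, by norm_num⟩
  obtain ⟨ρ, hρmem, hρ⟩ := intermediate_value_Ioo' (by norm_num : (0 : ℝ) ≤ 1 / 2) hcont h0mem
  refine ⟨ρ, ⟨hρmem, hρ⟩, ?_⟩
  rintro ρ' ⟨hρ'mem, hρ'⟩
  exact hanti.injOn (Set.Ioo_subset_Icc_self hρ'mem) (Set.Ioo_subset_Icc_self hρmem)
    (by rw [hρ, hρ'])
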